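/- There exists a ℂ-linear equivalence φ from the (N−1)-st exterior power ⋀[ℂ]^(N-1) V to the dual space Module.Dual ℂ V such that: (i) for every family v : Fin (N-1) → V and every w ∈ V, φ (v₀ ∧ ⋯ ∧ v_{N-2}) w equals the determinant of the N × N complex matrix whose first N−1 columns are v₀, …, v_{N-2} and whose last column is w; and (ii) for every U ∈ SU(N) and every x ∈ ⋀[ℂ]^(N-1) V, φ (exteriorPower.map (N-1) (Matrix.toLin' (U : Matrix (Fin N) (Fin N) ℂ)) x) = (φ x) ∘ₗ Matrix.toLin' ((U⁻¹ : SU(N)) : Matrix (Fin N) (Fin N) ℂ). (The ε-tensor provides an SU(N)-equivariant isomorphism between N−1 antisymmetrized fundamental factors and one antifundamental factor.) -/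

import Mathlib

open Matrix ExteriorAlgebra Module


/-- The wedge `v₀ ∧ ⋯ ∧ v_{n-1}` as an element of the `n`-th exterior power `⋀[ℂ]^n M`. -/
noncomputable def wedge {M : Type*} [AddCommGroup M] [Module ℂ M] (n : ℕ) (v : Fin n → M) :
    ⋀[ℂ]^n M :=
  ⟨ExteriorAlgebra.ιMulti ℂ n v, ExteriorAlgebra.ιMulti_range ℂ n (Set.mem_range_self v)⟩

noncomputable section EpsAux
variable (n : ℕ)

private lemma snoc_eq_dite (v : Fin n → (Fin (n+1) → ℂ)) (w : Fin (n+1) → ℂ) (j : Fin (n+1)) :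
    (Fin.snoc v w : Fin (n+1) → (Fin (n+1) → ℂ)) j = if h : (j : ℕ) < n then v ⟨j, h⟩ else w := by
  by_cases h : (j : ℕ) < n
  · rw [dif_pos h]
    have hj : j = Fin.castSucc ⟨j, h⟩ := by ext; rfl
    conv_lhs => rw [hj]
    rw [Fin.snoc_castSucc]
  · rw [dif_neg h]
    have hj : j = Fin.last n := by
      ext
      have := j.isLt
      simp only [Fin.val_last]
      omega
    rw [hj, Fin.snoc_last]

/-- the linear functional `w ↦ det (v₀ | ⋯ | v_{n-1} | w)` (in row form). -/
private def epsDual (v : Fin n → (Fin (n+1) → ℂ)) : Module.Dual ℂ (Fin (n+1) → ℂ) where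
  toFun w := Matrix.detRowAlternating (Fin.snoc v w)
  map_add' w w' := by
    have h := (Matrix.detRowAlternating (R := ℂ) (n := Fin (n+1))).map_update_add
      (Fin.snoc v w) (Fin.last n) w w'
    simpa only [Fin.update_snoc_last] using h
  map_smul' c w := by
    have h := (Matrix.detRowAlternating (R := ℂ) (n := Fin (n+1))).map_update_smul
      (Fin.snoc v w) (Fin.last n) c w
    simpa only [Fin.update_snoc_last, RingHom.id_apply] using h

private lemma epsDual_apply (v : Fin n → (Fin (n+1) → ℂ)) (w : Fin (n+1) → ℂ) :
    epsDual n v w = Matrix.detRowAlternating (Fin.snoc v w) := rfl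

/-- The `ε`-alternating map. -/
private def epsA : (Fin (n+1) → ℂ) [⋀^Fin n]→ₗ[ℂ] Module.Dual ℂ (Fin (n+1) → ℂ) where
  toFun v := epsDual n v
  map_update_add' := by
    intro dec v i x y
    have hdec : dec = instDecidableEqFin n := Subsingleton.elim _ _
    subst hdec
    refine LinearMap.ext fun w => ?_
    simp only [epsDual_apply, LinearMap.add_apply]
    rw [Fin.snoc_update, Fin.snoc_update, Fin.snoc_update]
    exact (Matrix.detRowAlternating (R := ℂ) (n := Fin (n+1))).map_update_add _ _ _ _
  map_update_smul' := by
    intro dec v i c x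
    have hdec : dec = instDecidableEqFin n := Subsingleton.elim _ _
    subst hdec
    refine LinearMap.ext fun w => ?_
    simp only [epsDual_apply, LinearMap.smul_apply]
    rw [Fin.snoc_update, Fin.snoc_update]
    exact (Matrix.detRowAlternating (R := ℂ) (n := Fin (n+1))).map_update_smul _ _ _ _
  map_eq_zero_of_eq' v i j hv hij := by
    refine LinearMap.ext fun w => ?_
    simp only [epsDual_apply, LinearMap.zero_apply]
    refine (Matrix.detRowAlternating (R := ℂ) (n := Fin (n+1))).map_eq_zero_of_eq
      (Fin.snoc v w) (i := Fin.castSucc i) (j := Fin.castSucc j) ?_ ?_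
    · rw [Fin.snoc_castSucc, Fin.snoc_castSucc]; exact hv
    · simpa using hij

private def epsFam : ∀ i : ℕ, (Fin (n+1) → ℂ) [⋀^Fin i]→ₗ[ℂ] Module.Dual ℂ (Fin (n+1) → ℂ) :=
  fun i => if h : i = n then h ▸ epsA n else 0

private lemma epsFam_n : epsFam n n = epsA n := by
  simp [epsFam]

/-- the candidate linear map. -/
private def phi0 : (⋀[ℂ]^n (Fin (n+1) → ℂ)) →ₗ[ℂ] Module.Dual ℂ (Fin (n+1) → ℂ) :=
  (ExteriorAlgebra.liftAlternating (epsFam n)).domRestrict (⋀[ℂ]^n (Fin (n+1) → ℂ))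

private lemma phi0_wedge (v : Fin n → (Fin (n+1) → ℂ)) :
    phi0 n (wedge n v) = epsA n v := by
  show ExteriorAlgebra.liftAlternating (epsFam n) (ExteriorAlgebra.ιMulti ℂ n v) = _
  rw [ExteriorAlgebra.liftAlternating_apply_ιMulti, epsFam_n]


private def bfam (i : Fin (n+1)) : Fin n → (Fin (n+1) → ℂ) :=
  fun k => Pi.single (i.succAbove k) 1

private def tau (i : Fin (n+1)) : Fin (n+1) → Fin (n+1) :=
  Fin.snoc i.succAbove i

private lemma tau_castSucc (i : Fin (n+1)) (k : Fin n) :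
    tau n i (Fin.castSucc k) = i.succAbove k := by
  simp [tau]

private lemma tau_last (i : Fin (n+1)) : tau n i (Fin.last n) = i := by
  simp [tau]

private lemma tau_bij (i : Fin (n+1)) : Function.Bijective (tau n i) := by
  rw [Fintype.bijective_iff_injective_and_card]
  refine ⟨fun a b hab => ?_, rfl⟩
  induction a using Fin.lastCases with
  | last =>
    induction b using Fin.lastCases with
    | last => rfl
    | cast b =>
      rw [tau_last, tau_castSucc] at hab
      exact absurd hab.symm (Fin.succAbove_ne i b)
  | cast a =>
    induction b using Fin.lastCases with
    | last =>
      rw [tau_last, tau_castSucc] at hab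
      exact absurd hab (Fin.succAbove_ne i a)
    | cast b =>
      rw [tau_castSucc, tau_castSucc] at hab
      rw [Fin.succAbove_right_injective hab]

private def sigmaP (i : Fin (n+1)) : Equiv.Perm (Fin (n+1)) :=
  Equiv.ofBijective _ (tau_bij n i)

private lemma snoc_bfam (i : Fin (n+1)) :
    (Fin.snoc (bfam n i) (Pi.single i 1) : Fin (n+1) → Fin (n+1) → ℂ)
      = fun k => Pi.single (tau n i k) 1 := by
  funext k
  induction k using Fin.lastCases with
  | last => rw [Fin.snoc_last, tau_last]
  | cast k => rw [Fin.snoc_castSucc, tau_castSucc]; rfl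

private def cdet (i : Fin (n+1)) : ℂ :=
  Matrix.detRowAlternating (Fin.snoc (bfam n i) (Pi.single i 1))

private lemma cdet_ne_zero (i : Fin (n+1)) : cdet n i ≠ 0 := by
  have hmat : (Matrix.of (Fin.snoc (bfam n i) (Pi.single i 1) :
      Fin (n+1) → Fin (n+1) → ℂ)) = (sigmaP n i).permMatrix ℂ := by
    ext k l
    rw [snoc_bfam]
    simp [Equiv.Perm.permMatrix, PEquiv.toMatrix_apply, Equiv.toPEquiv_apply,
      Pi.single_apply, sigmaP, Equiv.ofBijective_apply, eq_comm]
  have : cdet n i = Matrix.det ((sigmaP n i).permMatrix ℂ) := by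
    rw [← hmat]; rfl
  rw [this, Matrix.det_permutation]
  rcases Int.units_eq_one_or (Equiv.Perm.sign (sigmaP n i)) with h | h <;>
    simp [h]


private lemma pi_single_sum (w : Fin (n+1) → ℂ) :
    w = ∑ j, w j • (Pi.single j 1 : Fin (n+1) → ℂ) := by
  funext l
  rw [Finset.sum_apply]
  simp [Pi.single_apply, eq_comm]

private lemma epsA_bfam (i : Fin (n+1)) (w : Fin (n+1) → ℂ) :
    epsA n (bfam n i) w = cdet n i * w i := by
  have key : Matrix.detRowAlternating (Fin.snoc (bfam n i) w)
      = ∑ j, w j • Matrix.detRowAlternating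
          (Fin.snoc (bfam n i) (Pi.single j 1) : Fin (n+1) → Fin (n+1) → ℂ) := by
    conv_lhs => rw [pi_single_sum n w,
      ← Fin.update_snoc_last (α := fun _ : Fin (n+1) => Fin (n+1) → ℂ) (p := bfam n i)
        (x := w)]
    erw [(Matrix.detRowAlternating (R := ℂ) (n := Fin (n+1))).toMultilinearMap.map_update_sum]
    refine Finset.sum_congr rfl fun j _ => ?_
    have h1 := (Matrix.detRowAlternating (R := ℂ) (n := Fin (n+1))).map_update_smul
      (Fin.snoc (bfam n i) w) (Fin.last n) (w j) (Pi.single j 1)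
    erw [h1, Fin.update_snoc_last]
  have hzero : ∀ j, j ≠ i → Matrix.detRowAlternating
      (Fin.snoc (bfam n i) (Pi.single j 1) : Fin (n+1) → Fin (n+1) → ℂ) = 0 := by
    intro j hj
    obtain ⟨k, hk⟩ := Fin.exists_succAbove_eq (x := j) (y := i) hj
    refine AlternatingMap.map_eq_zero_of_eq _ _
      (i := Fin.castSucc k) (j := Fin.last n) ?_ (Fin.castSucc_lt_last k).ne
    rw [Fin.snoc_castSucc, Fin.snoc_last]
    show Pi.single (i.succAbove k) 1 = _
    rw [hk]
  have : epsA n (bfam n i) w = Matrix.detRowAlternating (Fin.snoc (bfam n i) w) := rfl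
  rw [this, key, Finset.sum_eq_single i
    (fun j _ hj => by rw [hzero j hj, smul_zero])
    (fun h => absurd (Finset.mem_univ i) h)]
  rw [smul_eq_mul, mul_comm]
  rfl

private lemma phi0_surj : Function.Surjective (phi0 n) := by
  intro g
  refine ⟨∑ i, ((cdet n i)⁻¹ * g (Pi.single i 1)) • wedge n (bfam n i), ?_⟩
  refine LinearMap.ext fun w => ?_
  rw [map_sum, LinearMap.sum_apply]
  have hg : g w = ∑ i : Fin (n+1), g (Pi.single i 1) * w i := by
    conv_lhs => rw [pi_single_sum n w]
    rw [map_sum]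
    exact Finset.sum_congr rfl fun i _ => by
      rw [LinearMap.map_smul, smul_eq_mul, mul_comm]
  rw [hg]
  refine Finset.sum_congr rfl fun i _ => ?_
  rw [LinearMap.map_smul, LinearMap.smul_apply, phi0_wedge, epsA_bfam, smul_eq_mul,
    mul_comm ((cdet n i)⁻¹) _, mul_assoc, ← mul_assoc ((cdet n i)⁻¹) _ _,
    inv_mul_cancel₀ (cdet_ne_zero n i), one_mul]

private lemma iMulti_basis_mem_span (f' : Fin n → Fin (n+1)) :
    ExteriorAlgebra.ιMulti ℂ n (fun k => (Pi.single (f' k) 1 : Fin (n+1) → ℂ))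
      ∈ Submodule.span ℂ (Set.range fun i => ExteriorAlgebra.ιMulti ℂ n (bfam n i)) := by
  by_cases hinj : Function.Injective f'
  · have hcard : ((Finset.univ.image f')ᶜ : Finset (Fin (n+1))).Nonempty := by
      rw [← Finset.card_pos, Finset.card_compl, Finset.card_image_of_injective _ hinj]
      simp
    obtain ⟨i, hi⟩ := hcard
    have hne : ∀ k, f' k ≠ i := by
      intro k hk
      rw [Finset.mem_compl] at hi
      exact hi (Finset.mem_image.mpr ⟨k, Finset.mem_univ _, hk⟩)
    choose g hg using fun k => Fin.exists_succAbove_eq (hne k)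
    have hginj : Function.Injective g := fun a b hab => by
      apply hinj
      rw [← hg a, ← hg b, hab]
    have hgbij : Function.Bijective g :=
      (Fintype.bijective_iff_injective_and_card g).mpr ⟨hginj, rfl⟩
    have hcomp : (fun k => (Pi.single (f' k) 1 : Fin (n+1) → ℂ))
        = bfam n i ∘ (Equiv.ofBijective g hgbij) := by
      funext k
      simp only [Function.comp_apply, bfam, Equiv.ofBijective_apply, hg]
    rw [hcomp, AlternatingMap.map_perm]
    exact Submodule.smul_mem _ _ (Submodule.subset_span ⟨i, rfl⟩)
  · rw [Function.not_injective_iff] at hinj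
    obtain ⟨a, b, hab, hne⟩ := hinj
    rw [AlternatingMap.map_eq_zero_of_eq _ _ (by rw [hab]) hne]
    exact Submodule.zero_mem _

private lemma span_eq :
    Submodule.span ℂ (Set.range fun i => ExteriorAlgebra.ιMulti ℂ n (bfam n i))
      = ⋀[ℂ]^n (Fin (n+1) → ℂ) := by
  refine le_antisymm ?_ ?_
  · rw [Submodule.span_le]
    rintro _ ⟨i, rfl⟩
    exact ExteriorAlgebra.ιMulti_range ℂ n (Set.mem_range_self _)
  · rw [← ExteriorAlgebra.ιMulti_span_fixedDegree, Submodule.span_le]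
    rintro _ ⟨v, rfl⟩
    have expand : ExteriorAlgebra.ιMulti ℂ n v
        = ∑ f' : Fin n → Fin (n+1), (∏ j, v j (f' j)) •
            ExteriorAlgebra.ιMulti ℂ n (fun k => (Pi.single (f' k) 1 : Fin (n+1) → ℂ)) := by
      have hv : v = fun j => ∑ l, v j l • (Pi.single l 1 : Fin (n+1) → ℂ) := by
        funext j
        exact pi_single_sum n (v j)
      conv_lhs => rw [hv]
      rw [show (ExteriorAlgebra.ιMulti ℂ n)
            (fun j => ∑ l, v j l • (Pi.single l 1 : Fin (n+1) → ℂ))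
          = ((ExteriorAlgebra.ιMulti ℂ n).toMultilinearMap)
            (fun j => ∑ l, v j l • (Pi.single l 1 : Fin (n+1) → ℂ)) from rfl,
        MultilinearMap.map_sum]
      refine Finset.sum_congr rfl fun f' _ => ?_
      exact MultilinearMap.map_smul_univ _ _ _
    rw [expand]
    exact Submodule.sum_mem _ fun f' _ =>
      Submodule.smul_mem _ _ (iMulti_basis_mem_span n f')

private instance : FiniteDimensional ℂ (⋀[ℂ]^n (Fin (n+1) → ℂ)) := by
  rw [← span_eq]
  exact FiniteDimensional.span_of_finite ℂ (Set.finite_range _)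

private lemma finrank_le_aux : Module.finrank ℂ (⋀[ℂ]^n (Fin (n+1) → ℂ)) ≤ n + 1 := by
  rw [← span_eq]
  simpa [Set.finrank] using
    finrank_range_le_card (R := ℂ) fun i : Fin (n+1) => ExteriorAlgebra.ιMulti ℂ n (bfam n i)

private lemma phi0_inj : Function.Injective (phi0 n) := by
  rw [← LinearMap.ker_eq_bot]
  have h1 := LinearMap.finrank_range_add_finrank_ker (phi0 n)
  have h2 : Module.finrank ℂ (LinearMap.range (phi0 n)) = n + 1 := by
    rw [LinearMap.range_eq_top.mpr (phi0_surj n), finrank_top,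
      Subspace.dual_finrank_eq]
    simp
  have h3 := finrank_le_aux n
  have hk : Module.finrank ℂ (LinearMap.ker (phi0 n)) ≤ finrank ℂ (⋀[ℂ]^n (Fin (n+1) → ℂ)) := by
    omega
  have hfr : Module.finrank ℂ (⋀[ℂ]^n (Fin (n+1) → ℂ)) = n + 1 := by omega
  rw [LinearMap.ker_eq_bot]
  exact (LinearMap.injective_iff_surjective_of_finrank_eq_finrank
    (by rw [hfr, Subspace.dual_finrank_eq]; simp)).mpr (phi0_surj n)


private lemma map_mem (f : (Fin (n+1) → ℂ) →ₗ[ℂ] (Fin (n+1) → ℂ)) :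
    ∀ x ∈ ⋀[ℂ]^n (Fin (n+1) → ℂ),
      (ExteriorAlgebra.map f).toLinearMap x ∈ ⋀[ℂ]^n (Fin (n+1) → ℂ) := by
  intro x hx
  rw [← ExteriorAlgebra.ιMulti_span_fixedDegree] at hx
  induction hx using Submodule.span_induction with
  | mem y hy =>
    obtain ⟨v, rfl⟩ := hy
    rw [AlgHom.toLinearMap_apply, ExteriorAlgebra.map_apply_ιMulti]
    exact ExteriorAlgebra.ιMulti_range ℂ n (Set.mem_range_self _)
  | zero => rw [map_zero]; exact Submodule.zero_mem _
  | add a b _ _ ha hb => rw [map_add]; exact Submodule.add_mem _ ha hb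
  | smul c a _ ha => rw [LinearMap.map_smul]; exact Submodule.smul_mem _ _ ha

private lemma wedge_span_top :
    Submodule.span ℂ (Set.range (wedge n (M := Fin (n+1) → ℂ))) = ⊤ := by
  apply Submodule.map_injective_of_injective
    (⋀[ℂ]^n (Fin (n+1) → ℂ)).injective_subtype
  rw [Submodule.map_span, Submodule.map_top, Submodule.range_subtype,
    ← Set.range_comp]
  exact ExteriorAlgebra.ιMulti_span_fixedDegree ℂ n

end EpsAux

/-- The `ε`-tensor provides an `SU(N)`-equivariant linear isomorphism between the `(N-1)`-st
exterior power of the fundamental representation and the antifundamental (dual)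
representation: `φ (v₀ ∧ ⋯ ∧ v_{N-2}) w = det (v₀ | ⋯ | v_{N-2} | w)`, and `φ` intertwines
the induced action on `⋀^{N-1} V` with the contragredient action `g ↦ g ∘ₗ toLin' (U⁻¹)`. -/
theorem epsilon_equivariant_iso (N : ℕ) (hN : 0 < N) :
    ∃ φ : (⋀[ℂ]^(N - 1) (Fin N → ℂ)) ≃ₗ[ℂ] Module.Dual ℂ (Fin N → ℂ),
      (∀ (v : Fin (N - 1) → (Fin N → ℂ)) (w : Fin N → ℂ),
        φ (wedge (N - 1) v) w =
          (Matrix.of fun (i : Fin N) (j : Fin N) =>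
            if h : (j : ℕ) < N - 1 then v ⟨j, h⟩ i else w i).det) ∧
      ∀ U : Matrix.specialUnitaryGroup (Fin N) ℂ,
        ∃ h : ∀ x ∈ ⋀[ℂ]^(N - 1) (Fin N → ℂ),
          (ExteriorAlgebra.map
            (Matrix.toLin' (U : Matrix (Fin N) (Fin N) ℂ))).toLinearMap x
              ∈ ⋀[ℂ]^(N - 1) (Fin N → ℂ),
          ∀ x : ⋀[ℂ]^(N - 1) (Fin N → ℂ),
            φ (((ExteriorAlgebra.map
                (Matrix.toLin' (U : Matrix (Fin N) (Fin N) ℂ))).toLinearMap.restrict h) x)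
              = (φ x) ∘ₗ Matrix.toLin' ((U : Matrix (Fin N) (Fin N) ℂ)⁻¹) := by
  obtain ⟨n, rfl⟩ : ∃ n, N = n + 1 := ⟨N - 1, (Nat.succ_pred_eq_of_pos hN).symm⟩
  refine ⟨LinearEquiv.ofBijective (phi0 n) ⟨phi0_inj n, phi0_surj n⟩, ?_, ?_⟩
  · intro v w
    show phi0 n (wedge n v) w = _
    rw [phi0_wedge]
    show Matrix.detRowAlternating (Fin.snoc v w) = _
    have hmat : (Matrix.of fun (i : Fin (n+1)) (j : Fin (n+1)) =>
        if h : (j : ℕ) < n + 1 - 1 then v ⟨j, h⟩ i else w i)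
        = (Matrix.of (Fin.snoc v w : Fin (n+1) → Fin (n+1) → ℂ))ᵀ := by
      ext i j
      simp only [Matrix.of_apply, Matrix.transpose_apply]
      by_cases h : (j : ℕ) < n <;>
        simp [snoc_eq_dite, h]
    rw [hmat, Matrix.det_transpose]
    rfl
  · intro U
    have hdet : Matrix.det (U : Matrix (Fin (n+1)) (Fin (n+1)) ℂ) = 1 :=
      (Matrix.mem_specialUnitaryGroup_iff.mp U.2).2
    set A : Matrix (Fin (n+1)) (Fin (n+1)) ℂ := (U : Matrix (Fin (n+1)) (Fin (n+1)) ℂ)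
      with hA
    set f : (Fin (n+1) → ℂ) →ₗ[ℂ] (Fin (n+1) → ℂ) := Matrix.toLin' A with hf
    refine ⟨map_mem n f, ?_⟩
    have key : ∀ v : Fin n → (Fin (n+1) → ℂ),
        phi0 n (wedge n (⇑f ∘ v)) = (phi0 n (wedge n v)) ∘ₗ Matrix.toLin' A⁻¹ := by
      intro v
      rw [phi0_wedge, phi0_wedge]
      refine LinearMap.ext fun w => ?_
      show Matrix.detRowAlternating (Fin.snoc (⇑f ∘ v) w)
        = Matrix.detRowAlternating (Fin.snoc v (Matrix.toLin' A⁻¹ w))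
      have hAinv : Matrix.toLin' A⁻¹ w = A⁻¹.mulVec w := Matrix.toLin'_apply _ _
      rw [hAinv]
      have hmat : Matrix.of (Fin.snoc (⇑f ∘ v) w : Fin (n+1) → Fin (n+1) → ℂ)
          = Matrix.of (Fin.snoc v (A⁻¹.mulVec w) : Fin (n+1) → Fin (n+1) → ℂ) * Aᵀ := by
        ext k i
        rw [Matrix.mul_apply]
        induction k using Fin.lastCases with
        | last =>
          simp only [Matrix.of_apply, Fin.snoc_last, Matrix.transpose_apply]
          have h1 : ∑ l, (A⁻¹.mulVec w) l * A i l = A.mulVec (A⁻¹.mulVec w) i := by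
            simp [Matrix.mulVec, dotProduct, mul_comm]
          rw [h1, Matrix.mulVec_mulVec, Matrix.mul_nonsing_inv _ (by rw [hdet]; exact isUnit_one),
            Matrix.one_mulVec]
        | cast k' =>
          simp only [Matrix.of_apply, Fin.snoc_castSucc, Matrix.transpose_apply,
            Function.comp_apply]
          rw [hf, Matrix.toLin'_apply]
          simp [Matrix.mulVec, dotProduct, mul_comm]
      show Matrix.det (Matrix.of (Fin.snoc (⇑f ∘ v) w : Fin (n+1) → Fin (n+1) → ℂ)) = _
      rw [hmat, Matrix.det_mul, Matrix.det_transpose, hdet, mul_one]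
      rfl
    set φL := (LinearEquiv.ofBijective (phi0 n) ⟨phi0_inj n, phi0_surj n⟩).toLinearMap
    have hLL : φL ∘ₗ ((ExteriorAlgebra.map f).toLinearMap.restrict (map_mem n f))
        = (LinearMap.lcomp ℂ ℂ (Matrix.toLin' A⁻¹)) ∘ₗ φL := by
      apply LinearMap.ext_on (wedge_span_top n)
      rintro _ ⟨v, rfl⟩
      simp only [LinearMap.comp_apply]
      have hFw : ((ExteriorAlgebra.map f).toLinearMap.restrict (map_mem n f)) (wedge n v)
          = wedge n (⇑f ∘ v) := by
        apply Subtype.ext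
        rw [LinearMap.restrict_apply]
        show (ExteriorAlgebra.map f).toLinearMap (ExteriorAlgebra.ιMulti ℂ n v) = _
        rw [AlgHom.toLinearMap_apply, ExteriorAlgebra.map_apply_ιMulti]
        rfl
      rw [hFw]
      show phi0 n (wedge n (⇑f ∘ v)) = LinearMap.lcomp ℂ ℂ (Matrix.toLin' A⁻¹) (phi0 n (wedge n v))
      rw [key v]
      rfl
    intro x
    exact LinearMap.congr_fun hLL x
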